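/- Let h > 0, x ∈ ℝ, and let v : ℝ → ℝ be four times continuously differentiable on the interval [x − 2h, x + h], with M = sup over [x − 2h, x + h] of |v⁗|. Then |(v(x − 2h) − 6 v(x − h) + 3 v(x) + 2 v(x + h))/(6h) − v′(x)| ≤ (M/6) h³. -/

import Mathlib

open Set
open scoped Nat

/-- Taylor bound with arbitrary expansion point inside the interval, with Lagrange-type
denominator `(n+1)!`. -/
theorem taylor_bound_center {f : ℝ → ℝ} {a b C x₀ y : ℝ} {n : ℕ} (hab : a < b)
    (hf : ContDiffOn ℝ (n + 1) f (Icc a b)) (hx₀ : x₀ ∈ Icc a b) (hy : y ∈ Icc a b)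
    (hC : ∀ z ∈ Icc a b, ‖iteratedDerivWithin (n + 1) f (Icc a b) z‖ ≤ C) :
    ‖f y - taylorWithinEval f n (Icc a b) x₀ y‖ ≤ C * |y - x₀| ^ (n + 1) / (n + 1)! := by
  have hfact : (0 : ℝ) < (n + 1)! := by positivity
  have hfact' : ((n + 1)! : ℝ) = (n + 1) * n ! := by
    rw [Nat.factorial_succ]; push_cast; ring
  have hf' : DifferentiableOn ℝ (iteratedDerivWithin n f (Icc a b)) (Icc a b) :=
    hf.differentiableOn_iteratedDerivWithin (by exact_mod_cast n.lt_succ_self)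
      (uniqueDiffOn_Icc hab)
  set g : ℝ → ℝ := fun t => taylorWithinEval f n (Icc a b) t y with hg
  have hderiv : ∀ t ∈ Icc a b, HasDerivWithinAt g
      (((n ! : ℝ)⁻¹ * (y - t) ^ n) • iteratedDerivWithin (n + 1) f (Icc a b) t) (Icc a b) t :=
    fun t ht => hasDerivWithinAt_taylorWithinEval_at_Icc y hab ht hf.of_succ hf'
  have hgc : ContinuousOn g (Icc a b) := fun t ht => (hderiv t ht).continuousWithinAt
  by_cases hxy : x₀ = y
  · subst hxy
    rw [taylorWithinEval_self, sub_self, sub_self, norm_zero, abs_zero,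
      zero_pow (Nat.succ_ne_zero n), mul_zero, zero_div]
  set K : ℝ := C / (n + 1)! with hK
  have hKn : K * (n + 1) = C / n ! := by
    rw [hK, hfact']
    field_simp
  rcases le_total x₀ y with hle | hle
  · have hlt : x₀ < y := lt_of_le_of_ne hle hxy
    set F : ℝ → ℝ := fun t => g t - g x₀ with hF
    set B : ℝ → ℝ := fun t => K * ((y - x₀) ^ (n + 1) - (y - t) ^ (n + 1)) with hB
    have hBd : ∀ t, HasDerivAt B (K * ((n + 1) * (y - t) ^ n)) t := by
      intro t
      have h1 := monomial_has_deriv_aux t y n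
      have h2 := ((hasDerivAt_const t ((y - x₀) ^ (n + 1))).sub h1).const_mul K
      refine h2.congr_deriv ?_
      push_cast
      ring
    have hsub : Icc x₀ y ⊆ Icc a b := Icc_subset_Icc hx₀.1 hy.2
    have hFc : ContinuousOn F (Icc x₀ y) := (hgc.mono hsub).sub continuousOn_const
    have hFd : ∀ t ∈ Ico x₀ y, HasDerivWithinAt F
        (((n ! : ℝ)⁻¹ * (y - t) ^ n) • iteratedDerivWithin (n + 1) f (Icc a b) t) (Ici t) t := by
      intro t ht
      have htab : t ∈ Ico a b := ⟨le_trans hx₀.1 ht.1, lt_of_lt_of_le ht.2 hy.2⟩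
      exact ((hderiv t (Ico_subset_Icc_self htab)).sub_const _).mono_of_mem_nhdsWithin
        (Icc_mem_nhdsGE_of_mem htab)
    have ha0 : ‖F x₀‖ ≤ B x₀ := by simp [hF, hB]
    have hbound : ∀ t ∈ Ico x₀ y,
        ‖((n ! : ℝ)⁻¹ * (y - t) ^ n) • iteratedDerivWithin (n + 1) f (Icc a b) t‖ ≤
          K * ((n + 1) * (y - t) ^ n) := by
      intro t ht
      have hyt : (0 : ℝ) ≤ y - t := by linarith [ht.2.le]
      rw [norm_smul, Real.norm_eq_abs, abs_mul, abs_inv, abs_pow, Nat.abs_cast,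
        abs_of_nonneg hyt]
      have hDt : ‖iteratedDerivWithin (n + 1) f (Icc a b) t‖ ≤ C :=
        hC t ⟨le_trans hx₀.1 ht.1, le_trans ht.2.le hy.2⟩
      have : (n ! : ℝ)⁻¹ * (y - t) ^ n * ‖iteratedDerivWithin (n + 1) f (Icc a b) t‖ ≤
          (n ! : ℝ)⁻¹ * (y - t) ^ n * C := by
        gcongr
      refine this.trans (le_of_eq ?_)
      rw [← mul_assoc, hKn]
      field_simp
    have := image_norm_le_of_norm_deriv_right_le_deriv_boundary hFc hFd ha0 hBd hbound
      (right_mem_Icc.2 hle)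
    have hgy : g y = f y := taylorWithinEval_self f n (Icc a b) y
    rw [hF] at this
    simp only [hgy, hB, sub_self, zero_pow (Nat.succ_ne_zero n), sub_zero] at this
    rw [abs_of_nonneg (by linarith : (0:ℝ) ≤ y - x₀)]
    calc ‖f y - taylorWithinEval f n (Icc a b) x₀ y‖ ≤ K * (y - x₀) ^ (n + 1) := this
      _ = C * (y - x₀) ^ (n + 1) / (n + 1)! := by rw [hK]; ring
  · have hlt : y < x₀ := lt_of_le_of_ne hle fun h => hxy h.symm
    set F : ℝ → ℝ := fun t => g t - g y with hF
    set B : ℝ → ℝ := fun t => K * (t - y) ^ (n + 1) with hB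
    have hBd : ∀ t, HasDerivAt B (K * ((n + 1) * (t - y) ^ n)) t := by
      intro t
      have h1 := (((hasDerivAt_id t).sub_const y).pow (n + 1)).const_mul K
      refine h1.congr_deriv ?_
      push_cast
      simp only [id_eq, Nat.add_sub_cancel]
      ring
    have hsub : Icc y x₀ ⊆ Icc a b := Icc_subset_Icc hy.1 hx₀.2
    have hFc : ContinuousOn F (Icc y x₀) := (hgc.mono hsub).sub continuousOn_const
    have hFd : ∀ t ∈ Ico y x₀, HasDerivWithinAt F
        (((n ! : ℝ)⁻¹ * (y - t) ^ n) • iteratedDerivWithin (n + 1) f (Icc a b) t) (Ici t) t := by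
      intro t ht
      have htab : t ∈ Ico a b := ⟨le_trans hy.1 ht.1, lt_of_lt_of_le ht.2 hx₀.2⟩
      exact ((hderiv t (Ico_subset_Icc_self htab)).sub_const _).mono_of_mem_nhdsWithin
        (Icc_mem_nhdsGE_of_mem htab)
    have ha0 : ‖F y‖ ≤ B y := by simp [hF, hB]
    have hbound : ∀ t ∈ Ico y x₀,
        ‖((n ! : ℝ)⁻¹ * (y - t) ^ n) • iteratedDerivWithin (n + 1) f (Icc a b) t‖ ≤
          K * ((n + 1) * (t - y) ^ n) := by
      intro t ht
      have hyt : (0 : ℝ) ≤ t - y := by linarith [ht.1]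
      rw [norm_smul, Real.norm_eq_abs, abs_mul, abs_inv, abs_pow, Nat.abs_cast]
      have habs : |y - t| = t - y := by rw [abs_sub_comm, abs_of_nonneg hyt]
      rw [habs]
      have hDt : ‖iteratedDerivWithin (n + 1) f (Icc a b) t‖ ≤ C :=
        hC t ⟨le_trans hy.1 ht.1, le_trans ht.2.le hx₀.2⟩
      have : (n ! : ℝ)⁻¹ * (t - y) ^ n * ‖iteratedDerivWithin (n + 1) f (Icc a b) t‖ ≤
          (n ! : ℝ)⁻¹ * (t - y) ^ n * C := by
        gcongr
      refine this.trans (le_of_eq ?_)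
      rw [← mul_assoc, hKn]
      field_simp
    have := image_norm_le_of_norm_deriv_right_le_deriv_boundary hFc hFd ha0 hBd hbound
      (right_mem_Icc.2 hle)
    have hgy : g y = f y := taylorWithinEval_self f n (Icc a b) y
    rw [hF] at this
    simp only [hgy, hB] at this
    rw [norm_sub_rev] at this
    rw [abs_sub_comm, abs_of_nonneg (by linarith : (0:ℝ) ≤ x₀ - y)]
    calc ‖f y - taylorWithinEval f n (Icc a b) x₀ y‖ ≤ K * (x₀ - y) ^ (n + 1) := this
      _ = C * (x₀ - y) ^ (n + 1) / (n + 1)! := by rw [hK]; ring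

theorem conservative_flux_difference_third_order
    (h x : ℝ) (hh : 0 < h) (v : ℝ → ℝ) (M : ℝ)
    (hv : ContDiffOn ℝ 4 v (Set.Icc (x - 2 * h) (x + h)))
    (hM : ∀ y ∈ Set.Icc (x - 2 * h) (x + h),
      |iteratedDerivWithin 4 v (Set.Icc (x - 2 * h) (x + h)) y| ≤ M) :
    |(v (x - 2 * h) - 6 * v (x - h) + 3 * v x + 2 * v (x + h)) / (6 * h)
      - derivWithin v (Set.Icc (x - 2 * h) (x + h)) x| ≤ (M / 6) * h ^ 3 := by
  set s := Set.Icc (x - 2 * h) (x + h) with hs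
  have hab : x - 2 * h < x + h := by linarith
  have hx : x ∈ s := ⟨by linarith, by linarith⟩
  have hm1 : x - 2 * h ∈ s := ⟨le_refl _, by linarith⟩
  have hm2 : x - h ∈ s := ⟨by linarith, by linarith⟩
  have hm3 : x + h ∈ s := ⟨by linarith, le_refl _⟩
  have hv' : ContDiffOn ℝ ((3 : ℕ) + 1) v s := by exact_mod_cast hv
  have hM' : ∀ z ∈ s, ‖iteratedDerivWithin ((3 : ℕ) + 1) v s z‖ ≤ M := by
    intro z hz
    simpa [Real.norm_eq_abs] using hM z hz
  have E1 := taylor_bound_center hab hv' hx hm1 hM'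
  have E2 := taylor_bound_center hab hv' hx hm2 hM'
  have E3 := taylor_bound_center hab hv' hx hm3 hM'
  have hP : ∀ y : ℝ, taylorWithinEval v 3 s x y =
      v x + (y - x) * iteratedDerivWithin 1 v s x
        + (y - x) ^ 2 / 2 * iteratedDerivWithin 2 v s x
        + (y - x) ^ 3 / 6 * iteratedDerivWithin 3 v s x := by
    intro y
    rw [taylor_within_apply]
    simp [Finset.sum_range_succ, Nat.factorial, iteratedDerivWithin_zero]
    ring
  have hd1 : iteratedDerivWithin 1 v s x = derivWithin v s x :=
    by rw [iteratedDerivWithin_one]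
  -- simplify the abs arguments in E1..E3
  have ha1 : |x - 2 * h - x| = 2 * h := by rw [abs_of_nonpos (by linarith)]; ring
  have ha2 : |x - h - x| = h := by rw [abs_of_nonpos (by linarith)]; ring
  have ha3 : |x + h - x| = h := by rw [abs_of_nonneg (by linarith)]; ring
  rw [ha1] at E1; rw [ha2] at E2; rw [ha3] at E3
  have hfac : (((3:ℕ) + 1)! : ℝ) = 24 := by norm_num [Nat.factorial]
  rw [Real.norm_eq_abs] at E1 E2 E3
  rw [hfac] at E1 E2 E3
  set P1 := taylorWithinEval v 3 s x (x - 2 * h)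
  set P2 := taylorWithinEval v 3 s x (x - h)
  set P3 := taylorWithinEval v 3 s x (x + h)
  have key : (v (x - 2 * h) - 6 * v (x - h) + 3 * v x + 2 * v (x + h)) / (6 * h)
      - derivWithin v s x
      = ((v (x - 2 * h) - P1) - 6 * (v (x - h) - P2) + 2 * (v (x + h) - P3)) / (6 * h) := by
    have e1 : P1 = _ := hP (x - 2 * h)
    have e2 : P2 = _ := hP (x - h)
    have e3 : P3 = _ := hP (x + h)
    rw [e1, e2, e3, ← hd1]
    field_simp
    ring
  rw [key, abs_div, abs_of_pos (by linarith : (0:ℝ) < 6 * h)]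
  rw [div_le_iff₀ (by linarith : (0:ℝ) < 6 * h)]
  have b1 := abs_le.1 E1
  have b2 := abs_le.1 E2
  have b3 := abs_le.1 E3
  have hcomb : |(v (x - 2 * h) - P1) - 6 * (v (x - h) - P2) + 2 * (v (x + h) - P3)| ≤
      M * h ^ 4 := by
    rw [abs_le]
    constructor <;> nlinarith [b1.1, b1.2, b2.1, b2.2, b3.1, b3.2, pow_pos hh 4]
  calc |(v (x - 2 * h) - P1) - 6 * (v (x - h) - P2) + 2 * (v (x + h) - P3)|
      ≤ M * h ^ 4 := hcomb
    _ = M / 6 * h ^ 3 * (6 * h) := by ring
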